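/- Every verbally closed subgroup H of a free group F_r of finite rank r has rank at most r (in particular, H is finitely generated). -/

import Mathlib

/-- `H` is verbally closed in `G`: for every word `w` and `h ∈ H`, if the
equation `w(x₁,…,xₙ) = h` has a solution in `G` then it has one in `H`. -/
def VerballyClosedIn {G : Type*} [Group G] (H : Subgroup G) : Prop :=
  ∀ (n : ℕ) (w : FreeGroup (Fin n)) (h : G), h ∈ H →
    (∃ x : Fin n → G, FreeGroup.lift x w = h) →
    (∃ x : Fin n → G, (∀ j, x j ∈ H) ∧ FreeGroup.lift x w = h)

/-- Every verbally closed subgroup of a free group of rank `r` can be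
generated by at most `r` elements (i.e., has rank at most `r`). -/
theorem verballyClosed_rank_le {r : ℕ} (H : Subgroup (FreeGroup (Fin r)))
    (hvc : VerballyClosedIn H) :
    ∃ S : Finset (FreeGroup (Fin r)), S.card ≤ r ∧ Subgroup.closure ↑S = H := by
  classical
  -- Key step: any element of `H` lying in the commutator subgroup of the
  -- ambient free group lies in `⁅H, H⁆`.  This uses verbal closedness with
  -- the word `w := h` itself (whose obvious solution is the free basis).
  have key : ∀ h : FreeGroup (Fin r), h ∈ H →
      h ∈ commutator (FreeGroup (Fin r)) → h ∈ ⁅H, H⁆ := by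
    intro h hH hc
    obtain ⟨u, huH, hu⟩ := hvc r h h hH ⟨FreeGroup.of, FreeGroup.lift_of_apply h⟩
    have hrange : (FreeGroup.lift u).range ≤ H := by
      rw [FreeGroup.range_lift_eq_closure]
      exact (Subgroup.closure_le H).2 (by rintro _ ⟨j, rfl⟩; exact huH j)
    have hmem : FreeGroup.lift u h ∈
        Subgroup.map (FreeGroup.lift u) (commutator (FreeGroup (Fin r))) :=
      Subgroup.mem_map_of_mem _ hc
    rw [commutator_def, Subgroup.map_commutator, ← MonoidHom.range_eq_map] at hmem
    rw [hu] at hmem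
    exact Subgroup.commutator_mono hrange hrange hmem
  -- Hence an element of `H` that dies in the abelianization of the ambient
  -- group already lies in the commutator subgroup of `H` itself.
  have key2 : ∀ x : ↥H,
      Abelianization.of (x : FreeGroup (Fin r)) = 1 → x ∈ commutator ↥H := by
    intro x hx
    have hc : (x : FreeGroup (Fin r)) ∈ commutator (FreeGroup (Fin r)) :=
      (QuotientGroup.eq_one_iff _).1 hx
    have hmap : Subgroup.map H.subtype (commutator ↥H) = ⁅H, H⁆ := by
      rw [commutator_def, Subgroup.map_commutator, ← MonoidHom.range_eq_map,
        Subgroup.range_subtype]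
    have hx2 : (x : FreeGroup (Fin r)) ∈ Subgroup.map H.subtype (commutator ↥H) := by
      rw [hmap]; exact key x x.2 hc
    obtain ⟨y, hy, hyx⟩ := hx2
    rwa [show y = x from Subtype.ext hyx] at hy
  -- The induced map on abelianizations is injective.
  let μ : ↥H →* Abelianization (FreeGroup (Fin r)) :=
    (Abelianization.of).comp H.subtype
  let ψ : Abelianization ↥H →* Abelianization (FreeGroup (Fin r)) :=
    Abelianization.lift μ
  have hψ : Function.Injective ψ := by
    rw [injective_iff_map_eq_one]
    intro a ha
    obtain ⟨x, rfl⟩ := QuotientGroup.mk_surjective a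
    have hx : μ x = 1 := ha
    have : x ∈ commutator ↥H := key2 x hx
    exact (QuotientGroup.eq_one_iff x).2 this
  -- `H` is free (Nielsen–Schreier); let `ι` index a free basis.
  let ι := IsFreeGroup.Generators ↥H
  let e : ↥H ≃* FreeGroup ι := IsFreeGroup.toFreeGroup ↥H
  -- Build an injective additive map `(ι →₀ ℤ) →+ (Fin r →₀ ℤ)`.
  let Φ : Abelianization (FreeGroup ι) →* Abelianization (FreeGroup (Fin r)) :=
    ψ.comp (e.symm.abelianizationCongr).toMonoidHom
  have hΦ : Function.Injective Φ :=
    hψ.comp (e.symm.abelianizationCongr).injective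
  let g1 : (ι →₀ ℤ) →+ FreeAbelianGroup ι :=
    (FreeAbelianGroup.equivFinsupp ι).symm.toAddMonoidHom
  let g2 : FreeAbelianGroup ι →+ FreeAbelianGroup (Fin r) :=
    MonoidHom.toAdditive Φ
  let g3 : FreeAbelianGroup (Fin r) →+ (Fin r →₀ ℤ) :=
    (FreeAbelianGroup.equivFinsupp (Fin r)).toAddMonoidHom
  let f : (ι →₀ ℤ) →+ (Fin r →₀ ℤ) := g3.comp (g2.comp g1)
  have hf : Function.Injective f := by
    have h3 : Function.Injective g3 := (FreeAbelianGroup.equivFinsupp (Fin r)).injective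
    have h1 : Function.Injective g1 := (FreeAbelianGroup.equivFinsupp ι).symm.injective
    exact h3.comp (hΦ.comp h1)
  -- Rank comparison over `ℤ` bounds the cardinality of `ι` by `r`.
  have hrank := LinearMap.rank_le_of_injective f.toIntLinearMap hf
  rw [rank_finsupp_self', rank_finsupp_self', Cardinal.mk_fin] at hrank
  have hfin : Finite ι := by
    rw [← Cardinal.lt_aleph0_iff_finite]
    exact hrank.trans_lt (Cardinal.nat_lt_aleph0 r)
  haveI := hfin
  haveI : Fintype ι := Fintype.ofFinite ι
  have hcard : Fintype.card ι ≤ r := by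
    have : (Fintype.card ι : Cardinal) ≤ (r : Cardinal) := by
      rwa [Cardinal.mk_fintype] at hrank
    exact_mod_cast this
  -- The basis of `H`, viewed inside the ambient free group, gives `S`.
  let b : ι → ↥H := fun i => e.symm (FreeGroup.of i)
  let S : Finset (FreeGroup (Fin r)) := Finset.univ.image fun i => (b i : FreeGroup (Fin r))
  refine ⟨S, ?_, ?_⟩
  · exact (Finset.card_image_le.trans (by simp)).trans hcard
  · have hcoe : (↑S : Set (FreeGroup (Fin r))) = H.subtype '' Set.range b := by
      rw [Finset.coe_image, Finset.coe_univ, Set.image_univ, ← Set.range_comp]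
      rfl
    have htop : Subgroup.closure (Set.range b) = (⊤ : Subgroup ↥H) := by
      have : Set.range b = ⇑e.symm.toMonoidHom '' Set.range (FreeGroup.of (α := ι)) := by
        rw [← Set.range_comp]; rfl
      rw [this, ← MonoidHom.map_closure, FreeGroup.closure_range_of]
      exact Subgroup.map_top_of_surjective _ e.symm.surjective
    rw [hcoe, ← MonoidHom.map_closure, htop, ← MonoidHom.range_eq_map,
      Subgroup.range_subtype]
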